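/- Let T ∈ Λ³(ℝⁿ) be a 3-form and Φ_T: ℝⁿ → so(n) the map Φ_T(X) = X ⌟ T. Then T lies in Λ³ of the orthogonal complement of the kernel of Φ_T. In particular, if T cannot be reduced to a proper subspace of ℝⁿ, then n ≤ dim g*_T, where g*_T is the Lie algebra generated by the image of Φ_T. -/

import Mathlib

/-- For a 3-form `T` on `ℝⁿ` (given by its alternating coefficients w.r.t. the
standard basis) and a vector `X`, the 2-form `X ⌟ T` viewed as a matrix
(an element of `so(n)`): `(X ⌟ T)_{jk} = Σᵢ Xᵢ T_{ijk}`. -/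
def matT (n : ℕ) (T : Fin n → Fin n → Fin n → ℝ) (X : Fin n → ℝ) :
    Matrix (Fin n) (Fin n) ℝ :=
  Matrix.of fun j k => ∑ i, X i * T i j k

/-- Evaluation of the 3-form `T` on three vectors. -/
def evalT (n : ℕ) (T : Fin n → Fin n → Fin n → ℝ) (X Y Z : Fin n → ℝ) : ℝ :=
  ∑ i, ∑ j, ∑ k, X i * Y j * Z k * T i j k

attribute [instance] LieRing.ofAssociativeRing

/-- The Lie algebra `g*_T ⊆ so(n)` generated by the elements `X ⌟ T`. -/
def gStarT (n : ℕ) (T : Fin n → Fin n → Fin n → ℝ) :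
    LieSubalgebra ℝ (Matrix (Fin n) (Fin n) ℝ) :=
  LieSubalgebra.lieSpan ℝ (Matrix (Fin n) (Fin n) ℝ)
    {B | ∃ X : Fin n → ℝ, B = matT n T X}

/-- The map `Φ_T : X ↦ X ⌟ T` as a linear map. -/
def PhiT (n : ℕ) (T : Fin n → Fin n → Fin n → ℝ) :
    EuclideanSpace ℝ (Fin n) →ₗ[ℝ] Matrix (Fin n) (Fin n) ℝ where
  toFun X := matT n T X
  map_add' X Y := by
    ext j k
    simp [matT, add_mul, Finset.sum_add_distrib]
  map_smul' c X := by
    ext j k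
    simp [matT, Finset.mul_sum, mul_assoc]

/-- For a 3-form `T ∈ Λ³(ℝⁿ)` and `Φ_T(X) = X ⌟ T`, the form `T`
lies in `Λ³` of the orthogonal complement of `Ker Φ_T`, i.e. `T` vanishes as
soon as one of its arguments lies in `Ker Φ_T`.  In particular, if `T` cannot
be reduced to a proper subspace of `ℝⁿ`, then `n ≤ dim g*_T`. -/
theorem threeform_reduces_and_dim_bound (n : ℕ)
    (T : Fin n → Fin n → Fin n → ℝ)
    (halt : ∀ i j k : Fin n, T i j k = - T j i k ∧ T i j k = - T i k j) :
    (∀ X Y Z : EuclideanSpace ℝ (Fin n),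
        matT n T X = 0 → evalT n T X Y Z = 0)
    ∧ ((∀ W : Submodule ℝ (EuclideanSpace ℝ (Fin n)),
          (∀ X ∈ Wᗮ, matT n T X = 0) → W = ⊤) →
        n ≤ Module.finrank ℝ ↥(gStarT n T)) := by
  constructor
  · intro X Y Z h
    have key : evalT n T X Y Z = ∑ j, ∑ k, (matT n T X) j k * (Y j * Z k) := by
      unfold evalT matT
      rw [Finset.sum_comm]
      refine Finset.sum_congr rfl fun j _ => ?_
      rw [Finset.sum_comm]
      refine Finset.sum_congr rfl fun k _ => ?_
      rw [Matrix.of_apply, Finset.sum_mul]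
      exact Finset.sum_congr rfl fun i _ => by ring
    rw [key, h]
    simp
  · intro hirr
    set K : Submodule ℝ (EuclideanSpace ℝ (Fin n)) := LinearMap.ker (PhiT n T) with hK
    have hKtop : Kᗮ = ⊤ := by
      apply hirr
      intro X hX
      rw [Submodule.orthogonal_orthogonal] at hX
      exact hX
    have hKbot : K = ⊥ := by
      rw [← Submodule.orthogonal_orthogonal K, hKtop, Submodule.top_orthogonal_eq_bot]
    have hmem : ∀ X : EuclideanSpace ℝ (Fin n), PhiT n T X ∈ gStarT n T := by
      intro X
      exact LieSubalgebra.subset_lieSpan ⟨X, rfl⟩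
    let Φ' : EuclideanSpace ℝ (Fin n) →ₗ[ℝ] (gStarT n T).toSubmodule :=
      (PhiT n T).codRestrict (gStarT n T).toSubmodule hmem
    have hinj : Function.Injective Φ' := by
      rw [← LinearMap.ker_eq_bot]
      rw [LinearMap.ker_codRestrict]
      exact hKbot
    haveI : FiniteDimensional ℝ ↥(gStarT n T) :=
      inferInstanceAs (FiniteDimensional ℝ (gStarT n T).toSubmodule)
    have := LinearMap.finrank_le_finrank_of_injective hinj
    rw [finrank_euclideanSpace_fin] at this
    exact this
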